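/- Let Ω_S ⊆ ℝ² be a bounded open set, B ⊆ ∂Ω_S (the outer boundary ∂Ω_S∖Γ), ν > 0, ω₁ a Borel probability measure on Ω_S, and ω₂ a Borel probability measure on B. Suppose u_S : ℝ² → ℝ² is C² and p_S : ℝ² → ℝ is C¹ on a neighborhood of the closure of Ω_S, with −νΔu_S + ∇p_S = f_S and div u_S = 0 on Ω_S, and u_S = 0 on B. Fix q₃, q₄ ≥ 0. Then there exists a constant C ≥ 0, depending only on ν, q₃, q₄ and sup_{closure Ω_S} |p_S|, such that for every ε ∈ (0,1] and every C² vector field U_S : ℝ² → ℝ² and C¹ function P_S : ℝ² → ℝ satisfying, for all x in the closure of Ω_S: (i) |∂^α U_S(x) − ∂^α u_S(x)| ≤ ε componentwise for every multi-index α with |α| ≤ 2, (ii) |P_S(x) − p_S(x)| ≤ ε, and (iii) ‖∇P_S(x) − ∇p_S(x)‖ ≤ (|P_S(x)|^{q₃/2} + |p_S(x)|^{q₄/2}) · |P_S(x) − p_S(x)|, one has ∫_{Ω_S} ‖f_S + νΔU_S − ∇P_S‖² dω₁ + ∫_{Ω_S} |div U_S|² dω₁ + ∫_B ‖U_S‖²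 dω₂ ≤ C ε². -/

import Mathlib

open MeasureTheory

noncomputable section

/-- Standard basis vector of `ℝ² = EuclideanSpace ℝ (Fin 2)`. -/
def ee (i : Fin 2) : EuclideanSpace ℝ (Fin 2) := EuclideanSpace.single i 1

/-- Divergence of a vector field on `ℝ²`: trace of the Fréchet derivative. -/
def vdiv (v : EuclideanSpace ℝ (Fin 2) → EuclideanSpace ℝ (Fin 2))
    (x : EuclideanSpace ℝ (Fin 2)) : ℝ :=
  ∑ i : Fin 2, fderiv ℝ v x (ee i) i

/-- Componentwise Laplacian of a vector field on `ℝ²`: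
the sum of the pure second partial derivatives. -/
def vlap (v : EuclideanSpace ℝ (Fin 2) → EuclideanSpace ℝ (Fin 2))
    (x : EuclideanSpace ℝ (Fin 2)) : EuclideanSpace ℝ (Fin 2) :=
  ∑ j : Fin 2, iteratedFDeriv ℝ 2 v x ![ee j, ee j]

/-- The Euclidean norm on `ℝ²` is bounded by the sum of the absolute values of components. -/
lemma norm_le_sum_abs (v : EuclideanSpace ℝ (Fin 2)) : ‖v‖ ≤ |v 0| + |v 1| := by
  rw [EuclideanSpace.norm_eq, Fin.sum_univ_two]
  have h1 : ‖v 0‖ ^ 2 + ‖v 1‖ ^ 2 ≤ (|v 0| + |v 1|) ^ 2 := by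
    simp only [Real.norm_eq_abs]
    nlinarith [abs_nonneg (v 0), abs_nonneg (v 1)]
  calc Real.sqrt (‖v 0‖ ^ 2 + ‖v 1‖ ^ 2) ≤ Real.sqrt ((|v 0| + |v 1|) ^ 2) :=
        Real.sqrt_le_sqrt h1
    _ = |v 0| + |v 1| := Real.sqrt_sq (by positivity)

/-- Iterated derivative of a component equals the component of the iterated derivative,
for a `C²` map on an open set. -/
lemma iter_proj {f : EuclideanSpace ℝ (Fin 2) → EuclideanSpace ℝ (Fin 2)}
    {V : Set (EuclideanSpace ℝ (Fin 2))} (hV : IsOpen V)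
    (hf : ContDiffOn ℝ 2 f V) {k : ℕ} (hk : k ≤ 2)
    {x : EuclideanSpace ℝ (Fin 2)} (hx : x ∈ V)
    (i : Fin 2) (m : Fin k → EuclideanSpace ℝ (Fin 2)) :
    iteratedFDeriv ℝ k (fun y => f y i) x m = iteratedFDeriv ℝ k f x m i := by
  have hk' : (k : WithTop ℕ∞) ≤ 2 := by exact_mod_cast hk
  have h2 := (EuclideanSpace.proj (𝕜 := ℝ) i).iteratedFDerivWithin_comp_left (hf x hx)
      hV.uniqueDiffOn hx hk'
  have e1 := iteratedFDerivWithin_of_isOpen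
      (f := (EuclideanSpace.proj (𝕜 := ℝ) i) ∘ f) (𝕜 := ℝ) k hV hx
  have e2 := iteratedFDerivWithin_of_isOpen (f := f) (𝕜 := ℝ) k hV hx
  have key : iteratedFDeriv ℝ k ((EuclideanSpace.proj (𝕜 := ℝ) i) ∘ f) x =
      (EuclideanSpace.proj (𝕜 := ℝ) i).compContinuousMultilinearMap
        (iteratedFDeriv ℝ k f x) := by
    rw [← e1, h2, e2]
  have : iteratedFDeriv ℝ k (fun y => f y i) x m =
      iteratedFDeriv ℝ k ((EuclideanSpace.proj (𝕜 := ℝ) i) ∘ f) x m := rfl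
  rw [this, key]
  rfl

/-- Integral over a set of full measure of a function bounded on that set. -/
lemma setIntegral_le_of_forall_le {μ : Measure (EuclideanSpace ℝ (Fin 2))}
    [IsFiniteMeasure μ] {s : Set (EuclideanSpace ℝ (Fin 2))} (hs : μ s = 1)
    {f : EuclideanSpace ℝ (Fin 2) → ℝ} {c : ℝ} (hc : 0 ≤ c)
    (h : ∀ᵐ x ∂μ.restrict s, f x ≤ c) : ∫ x in s, f x ∂μ ≤ c := by
  by_cases hf : Integrable f (μ.restrict s)
  · have h2 : ∫ x in s, f x ∂μ ≤ ∫ _x in s, c ∂μ :=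
      integral_mono_ae hf (integrable_const c) h
    simpa [Measure.real, hs] using h2
  · rw [integral_undef hf]; exact hc

/-- Estimate (24): the Stokes part of the CDNN loss is `O(ε²)` for any approximant that is
uniformly `ε`-close (with derivatives up to order 2) to an exact Stokes solution. -/
theorem stokes_loss_estimate
    (ΩS B : Set (EuclideanSpace ℝ (Fin 2)))
    (hΩopen : IsOpen ΩS) (hΩbdd : Bornology.IsBounded ΩS)
    (hB : B ⊆ frontier ΩS)
    (ν : ℝ) (hν : 0 < ν)
    (ω₁ ω₂ : Measure (EuclideanSpace ℝ (Fin 2)))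
    [IsProbabilityMeasure ω₁] [IsProbabilityMeasure ω₂]
    (hω₁ : ω₁ ΩS = 1) (hω₂ : ω₂ B = 1)
    (uS : EuclideanSpace ℝ (Fin 2) → EuclideanSpace ℝ (Fin 2))
    (pS : EuclideanSpace ℝ (Fin 2) → ℝ)
    (fS : EuclideanSpace ℝ (Fin 2) → EuclideanSpace ℝ (Fin 2))
    -- `uS` is C² and `pS` is C¹ on an open neighborhood `V` of the closure of `ΩS`
    (V : Set (EuclideanSpace ℝ (Fin 2))) (hVopen : IsOpen V) (hVnbhd : closure ΩS ⊆ V)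
    (huS : ContDiffOn ℝ 2 uS V) (hpS : ContDiffOn ℝ 1 pS V)
    -- the exact Stokes system
    (hmom : ∀ x ∈ ΩS, -ν • vlap uS x + gradient pS x = fS x)
    (hdiv : ∀ x ∈ ΩS, vdiv uS x = 0)
    (hbc : ∀ x ∈ B, uS x = 0)
    (q₃ q₄ : ℝ) (hq₃ : 0 ≤ q₃) (hq₄ : 0 ≤ q₄) :
    ∃ C : ℝ, 0 ≤ C ∧
      ∀ ε : ℝ, 0 < ε → ε ≤ 1 →
      ∀ (US : EuclideanSpace ℝ (Fin 2) → EuclideanSpace ℝ (Fin 2))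
        (PS : EuclideanSpace ℝ (Fin 2) → ℝ),
        ContDiff ℝ 2 US → ContDiff ℝ 1 PS →
        -- (i) all partial derivatives up to order 2 are ε-close, componentwise
        (∀ x ∈ closure ΩS, ∀ k : ℕ, k ≤ 2 → ∀ m : Fin k → Fin 2, ∀ i : Fin 2,
          |iteratedFDeriv ℝ k (fun y => US y i) x (fun j => ee (m j)) -
            iteratedFDeriv ℝ k (fun y => uS y i) x (fun j => ee (m j))| ≤ ε) →
        -- (ii) the pressures are ε-close
        (∀ x ∈ closure ΩS, |PS x - pS x| ≤ ε) →
        -- (iii) polynomial-growth Lipschitz bound for the pressure gradient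
        (∀ x ∈ closure ΩS,
          ‖gradient PS x - gradient pS x‖ ≤
            (|PS x| ^ (q₃ / 2) + |pS x| ^ (q₄ / 2)) * |PS x - pS x|) →
        (∫ x in ΩS, ‖fS x + ν • vlap US x - gradient PS x‖ ^ 2 ∂ω₁) +
          (∫ x in ΩS, (vdiv US x) ^ 2 ∂ω₁) +
          (∫ x in B, ‖US x‖ ^ 2 ∂ω₂) ≤ C * ε ^ 2 := by
  -- sup of |pS| on the compact closure
  have hcomp : IsCompact (closure ΩS) := hΩbdd.isCompact_closure
  have hpc : ContinuousOn pS (closure ΩS) := (hpS.continuousOn).mono hVnbhd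
  obtain ⟨M0, hM0⟩ := hcomp.exists_bound_of_continuousOn hpc
  set M : ℝ := max M0 0 with hMdef
  have hMnonneg : 0 ≤ M := le_max_right _ _
  have hM : ∀ x ∈ closure ΩS, |pS x| ≤ M := fun x hx =>
    le_trans (by simpa [Real.norm_eq_abs] using hM0 x hx) (le_max_left _ _)
  set K : ℝ := (M + 1) ^ (q₃ / 2) + M ^ (q₄ / 2) with hKdef
  have hK : 0 ≤ K := by positivity
  refine ⟨(4 * ν + K) ^ 2 + 8, by positivity, ?_⟩
  intro ε hε hε1 US PS hUS hPS hi hii hiii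
  have hUSV : ContDiffOn ℝ 2 US Set.univ := hUS.contDiffOn
  -- componentwise closeness of second derivatives
  have hlap : ∀ x ∈ closure ΩS, ‖vlap US x - vlap uS x‖ ≤ 4 * ε := by
    intro x hx
    have hxV : x ∈ V := hVnbhd hx
    have hterm : ∀ i j : Fin 2,
        |iteratedFDeriv ℝ 2 US x ![ee j, ee j] i -
          iteratedFDeriv ℝ 2 uS x ![ee j, ee j] i| ≤ ε := by
      intro i j
      have hm : (fun j' : Fin 2 => ee (![j, j] j')) = ![ee j, ee j] := by
        funext j'; fin_cases j' <;> simp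
      have h := hi x hx 2 le_rfl ![j, j] i
      rw [hm] at h
      rwa [iter_proj isOpen_univ hUSV le_rfl (Set.mem_univ x),
        iter_proj hVopen huS le_rfl hxV] at h
    have hcompi : ∀ i : Fin 2, |(vlap US x - vlap uS x) i| ≤ 2 * ε := by
      intro i
      have e : (vlap US x - vlap uS x) i =
          (iteratedFDeriv ℝ 2 US x ![ee 0, ee 0] i -
            iteratedFDeriv ℝ 2 uS x ![ee 0, ee 0] i) +
          (iteratedFDeriv ℝ 2 US x ![ee 1, ee 1] i -
            iteratedFDeriv ℝ 2 uS x ![ee 1, ee 1] i) := by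
        simp only [vlap, Fin.sum_univ_two, PiLp.sub_apply, PiLp.add_apply]
        ring
      rw [e]
      calc |_ + _| ≤ |iteratedFDeriv ℝ 2 US x ![ee 0, ee 0] i -
              iteratedFDeriv ℝ 2 uS x ![ee 0, ee 0] i| +
            |iteratedFDeriv ℝ 2 US x ![ee 1, ee 1] i -
              iteratedFDeriv ℝ 2 uS x ![ee 1, ee 1] i| := abs_add_le _ _
        _ ≤ ε + ε := add_le_add (hterm i 0) (hterm i 1)
        _ = 2 * ε := by ring
    calc ‖vlap US x - vlap uS x‖ ≤ |(vlap US x - vlap uS x) 0| +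
          |(vlap US x - vlap uS x) 1| := norm_le_sum_abs _
      _ ≤ 2 * ε + 2 * ε := add_le_add (hcompi 0) (hcompi 1)
      _ = 4 * ε := by ring
  -- closeness of divergences
  have hdivc : ∀ x ∈ closure ΩS, |vdiv US x - vdiv uS x| ≤ 2 * ε := by
    intro x hx
    have hxV : x ∈ V := hVnbhd hx
    have hterm : ∀ i : Fin 2,
        |fderiv ℝ US x (ee i) i - fderiv ℝ uS x (ee i) i| ≤ ε := by
      intro i
      have hm : (fun j' : Fin 1 => ee (![i] j')) = ![ee i] := by
        funext j'; fin_cases j' <;> simp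
      have h := hi x hx 1 (by norm_num) ![i] i
      rw [hm] at h
      rw [iter_proj isOpen_univ hUSV (by norm_num) (Set.mem_univ x),
        iter_proj hVopen huS (by norm_num) hxV] at h
      simpa [iteratedFDeriv_one_apply] using h
    have e : vdiv US x - vdiv uS x =
        (fderiv ℝ US x (ee 0) 0 - fderiv ℝ uS x (ee 0) 0) +
        (fderiv ℝ US x (ee 1) 1 - fderiv ℝ uS x (ee 1) 1) := by
      simp only [vdiv, Fin.sum_univ_two]; ring
    rw [e]
    calc |_ + _| ≤ |fderiv ℝ US x (ee 0) 0 - fderiv ℝ uS x (ee 0) 0| +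
          |fderiv ℝ US x (ee 1) 1 - fderiv ℝ uS x (ee 1) 1| := abs_add_le _ _
      _ ≤ ε + ε := add_le_add (hterm 0) (hterm 1)
      _ = 2 * ε := by ring
  -- closeness of values
  have hval : ∀ x ∈ closure ΩS, ∀ i : Fin 2, |US x i - uS x i| ≤ ε := by
    intro x hx i
    have h := hi x hx 0 (by norm_num) ![] i
    simpa [iteratedFDeriv_zero_apply] using h
  -- gradient bound
  have hgrad : ∀ x ∈ closure ΩS, ‖gradient PS x - gradient pS x‖ ≤ K * ε := by
    intro x hx
    have hP : |PS x| ≤ M + 1 := by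
      have h1 := hii x hx
      have h2 := hM x hx
      calc |PS x| = |pS x + (PS x - pS x)| := by ring_nf
        _ ≤ |pS x| + |PS x - pS x| := abs_add_le _ _
        _ ≤ M + ε := add_le_add h2 h1
        _ ≤ M + 1 := by linarith
    have h3 : |PS x| ^ (q₃ / 2) ≤ (M + 1) ^ (q₃ / 2) :=
      Real.rpow_le_rpow (abs_nonneg _) hP (by positivity)
    have h4 : |pS x| ^ (q₄ / 2) ≤ M ^ (q₄ / 2) :=
      Real.rpow_le_rpow (abs_nonneg _) (hM x hx) (by positivity)
    calc ‖gradient PS x - gradient pS x‖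
        ≤ (|PS x| ^ (q₃ / 2) + |pS x| ^ (q₄ / 2)) * |PS x - pS x| := hiii x hx
      _ ≤ K * ε := by
          apply mul_le_mul (add_le_add h3 h4) (hii x hx) (abs_nonneg _) hK
  -- pointwise bound for the residual
  have hres : ∀ x ∈ ΩS, ‖fS x + ν • vlap US x - gradient PS x‖ ^ 2 ≤
      (4 * ν + K) ^ 2 * ε ^ 2 := by
    intro x hx
    have hxc : x ∈ closure ΩS := subset_closure hx
    have h1 : fS x + ν • vlap US x - gradient PS x =
        ν • (vlap US x - vlap uS x) - (gradient PS x - gradient pS x) := by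
      rw [← hmom x hx]; module
    have h2 : ‖fS x + ν • vlap US x - gradient PS x‖ ≤ (4 * ν + K) * ε := by
      rw [h1]
      calc ‖ν • (vlap US x - vlap uS x) - (gradient PS x - gradient pS x)‖
          ≤ ‖ν • (vlap US x - vlap uS x)‖ + ‖gradient PS x - gradient pS x‖ :=
            norm_sub_le _ _
        _ = ν * ‖vlap US x - vlap uS x‖ + ‖gradient PS x - gradient pS x‖ := by
            rw [norm_smul, Real.norm_eq_abs, abs_of_pos hν]
        _ ≤ ν * (4 * ε) + K * ε :=
            add_le_add (mul_le_mul_of_nonneg_left (hlap x hxc) hν.le) (hgrad x hxc)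
        _ = (4 * ν + K) * ε := by ring
    calc ‖fS x + ν • vlap US x - gradient PS x‖ ^ 2 ≤ ((4 * ν + K) * ε) ^ 2 := by
          apply pow_le_pow_left₀ (norm_nonneg _) h2
      _ = (4 * ν + K) ^ 2 * ε ^ 2 := by ring
  -- pointwise bound for the divergence
  have hdivb : ∀ x ∈ ΩS, (vdiv US x) ^ 2 ≤ 4 * ε ^ 2 := by
    intro x hx
    have h1 : |vdiv US x| ≤ 2 * ε := by
      have := hdivc x (subset_closure hx)
      rwa [hdiv x hx, sub_zero] at this
    calc (vdiv US x) ^ 2 = |vdiv US x| ^ 2 := (sq_abs _).symm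
      _ ≤ (2 * ε) ^ 2 := by apply pow_le_pow_left₀ (abs_nonneg _) h1
      _ = 4 * ε ^ 2 := by ring
  -- pointwise bound on the boundary
  have hbd : ∀ x ∈ B, ‖US x‖ ^ 2 ≤ 4 * ε ^ 2 := by
    intro x hx
    have hxc : x ∈ closure ΩS := by
      have := hB hx
      exact (frontier_subset_closure : frontier ΩS ⊆ closure ΩS) this
    have h1 : ‖US x‖ ≤ 2 * ε := by
      have e : US x = US x - uS x := by rw [hbc x hx, sub_zero]
      rw [e]
      calc ‖US x - uS x‖ ≤ |(US x - uS x) 0| + |(US x - uS x) 1| := norm_le_sum_abs _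
        _ = |US x 0 - uS x 0| + |US x 1 - uS x 1| := by
            simp [PiLp.sub_apply]
        _ ≤ ε + ε := add_le_add (hval x hxc 0) (hval x hxc 1)
        _ = 2 * ε := by ring
    calc ‖US x‖ ^ 2 ≤ (2 * ε) ^ 2 := by apply pow_le_pow_left₀ (norm_nonneg _) h1
      _ = 4 * ε ^ 2 := by ring
  -- combine via the integral bounds
  have I1 : (∫ x in ΩS, ‖fS x + ν • vlap US x - gradient PS x‖ ^ 2 ∂ω₁) ≤
      (4 * ν + K) ^ 2 * ε ^ 2 := by
    apply setIntegral_le_of_forall_le hω₁ (by positivity)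
    exact ae_restrict_of_forall_mem hΩopen.measurableSet hres
  have I2 : (∫ x in ΩS, (vdiv US x) ^ 2 ∂ω₁) ≤ 4 * ε ^ 2 := by
    apply setIntegral_le_of_forall_le hω₁ (by positivity)
    exact ae_restrict_of_forall_mem hΩopen.measurableSet hdivb
  have I3 : (∫ x in B, ‖US x‖ ^ 2 ∂ω₂) ≤ 4 * ε ^ 2 := by
    apply setIntegral_le_of_forall_le hω₂ (by positivity)
    rw [ae_iff]
    have hms : MeasurableSet {x : EuclideanSpace ℝ (Fin 2) | ¬ ‖US x‖ ^ 2 ≤ 4 * ε ^ 2} := by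
      have : {x : EuclideanSpace ℝ (Fin 2) | ¬ ‖US x‖ ^ 2 ≤ 4 * ε ^ 2} =
          {x : EuclideanSpace ℝ (Fin 2) | ‖US x‖ ^ 2 ≤ 4 * ε ^ 2}ᶜ := rfl
      rw [this]
      exact (measurableSet_le ((hUS.continuous.norm.pow 2).measurable) measurable_const).compl
    rw [Measure.restrict_apply hms]
    have he : {x : EuclideanSpace ℝ (Fin 2) | ¬ ‖US x‖ ^ 2 ≤ 4 * ε ^ 2} ∩ B = ∅ := by
      ext x
      simp only [Set.mem_inter_iff, Set.mem_setOf_eq, Set.mem_empty_iff_false,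
        iff_false, not_and]
      intro hnot hxB
      exact hnot (hbd x hxB)
    rw [he]
    exact measure_empty
  calc (∫ x in ΩS, ‖fS x + ν • vlap US x - gradient PS x‖ ^ 2 ∂ω₁) +
        (∫ x in ΩS, (vdiv US x) ^ 2 ∂ω₁) + (∫ x in B, ‖US x‖ ^ 2 ∂ω₂) ≤
      (4 * ν + K) ^ 2 * ε ^ 2 + 4 * ε ^ 2 + 4 * ε ^ 2 :=
        add_le_add (add_le_add I1 I2) I3
    _ = ((4 * ν + K) ^ 2 + 8) * ε ^ 2 := by ring

end
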